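/- Let n be an odd positive integer and q_n = e^{2πi/n}, q_n^{1/2} = e^{πi/n}. Define the n×n matrix Λ with entries Λ_{i,k} = q_n^{k² + i² + 4ik + i − k} for 0 ≤ i,k ≤ n−1. Then |det(Λ)| = n^{n/2}, and |Trace(Λ)| = √(gcd(6,n)·n). -/

import Mathlib

section AuxStmt14
open Finset

variable {n : ℕ} {q : ℂ}

lemma zpow_per (hpos : 0 < n) (hprim : IsPrimitiveRoot q n) {a b : ℤ}
    (h : (n:ℤ) ∣ (a - b)) : q ^ a = q ^ b := by
  have hq0 : q ≠ 0 := hprim.ne_zero hpos.ne'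
  obtain ⟨t, ht⟩ := h
  have ha : a = b + n * t := by linarith
  have hqn : q ^ (n:ℤ) = 1 := by
    rw [zpow_natCast, hprim.pow_eq_one]
  rw [ha, zpow_add₀ hq0, zpow_mul, hqn, one_zpow, mul_one]

lemma sum_zpow (hpos : 0 < n) (hprim : IsPrimitiveRoot q n) (c : ℤ) :
    ∑ k : Fin n, q ^ (c * (k:ℤ)) = if (n:ℤ) ∣ c then (n:ℂ) else 0 := by
  have hq0 : q ≠ 0 := hprim.ne_zero hpos.ne'
  have hk : ∀ k : Fin n, q ^ (c * (k:ℤ)) = (q^c) ^ (k:ℕ) := fun k => by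
    rw [zpow_mul, ← zpow_natCast (q^c)]
  simp only [hk]
  rw [Fin.sum_univ_eq_sum_range (fun k => (q^c)^k)]
  split_ifs with h
  · have hqc : q ^ c = 1 := (hprim.zpow_eq_one_iff_dvd c).mpr h
    simp [hqc]
  · have hqc : q ^ c ≠ 1 := fun hc => h ((hprim.zpow_eq_one_iff_dvd c).mp hc)
    rw [geom_sum_eq hqc]
    have h1 : (q^c)^n = 1 := by
      rw [← zpow_natCast, ← zpow_mul, mul_comm, zpow_mul, zpow_natCast, hprim.pow_eq_one, one_zpow]
    simp [h1]

end AuxStmt14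

open Matrix Complex

/-- For `n` odd, `q = e^{2πi/n}`, the `n×n` matrix `Λ_{i,k} = q^{k² + i² + 4ik + i - k}`
satisfies `|det Λ| = n^{n/2}` and `|Trace Λ| = √(gcd(6,n)·n)`. -/
theorem stmt_14 (n : ℕ) (hn : Odd n) (hpos : 0 < n)
    (q : ℂ) (hq : q = Complex.exp (2 * Real.pi * Complex.I / n))
    (Λ : Matrix (Fin n) (Fin n) ℂ)
    (hΛ : ∀ i k : Fin n,
      Λ i k = q ^ ((k : ℤ) ^ 2 + (i : ℤ) ^ 2 + 4 * (i : ℤ) * (k : ℤ) + (i : ℤ) - (k : ℤ))) :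
    ‖Λ.det‖ = (n : ℝ) ^ ((n : ℝ) / 2) ∧
      ‖Λ.trace‖ = Real.sqrt ((Nat.gcd 6 n : ℝ) * n) := by
  have hprim : IsPrimitiveRoot q n := by
    rw [hq]
    exact Complex.isPrimitiveRoot_exp n hpos.ne'
  have habs1 : ‖q‖ = 1 := by
    have h1 : (‖q‖) ^ n = 1 := by
      rw [← norm_pow, hprim.pow_eq_one, norm_one]
    have h0 : 0 ≤ ‖q‖ := norm_nonneg q
    by_contra hne
    rcases lt_or_gt_of_ne hne with hlt | hgt
    · have hc := pow_lt_one₀ h0 hlt hpos.ne'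
      rw [h1] at hc
      exact lt_irrefl 1 hc
    · have hc := one_lt_pow₀ hgt hpos.ne'
      rw [h1] at hc
      exact lt_irrefl 1 hc
  have zper : ∀ {a b : ℤ}, (n:ℤ) ∣ (a - b) → q ^ a = q ^ b :=
    fun h => zpow_per hpos hprim h
  have hsum : ∀ c : ℤ, ∑ k : Fin n, q ^ (c * (k:ℤ)) = if (n:ℤ) ∣ c then (n:ℂ) else 0 :=
    sum_zpow hpos hprim
  have hconj : ∀ m : ℤ, (starRingEnd ℂ) (q ^ m) = q ^ (-m) := by
    intro m
    rw [map_zpow₀, ← Complex.inv_eq_conj habs1, _root_.inv_zpow, ← _root_.zpow_neg]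
  constructor
  · have hq0 : q ≠ 0 := hprim.ne_zero hpos.ne'
    set V : Matrix (Fin n) (Fin n) ℂ := Matrix.of fun i k => q ^ (4*(i:ℤ)*(k:ℤ)) with hV
    have hconj : ∀ m : ℤ, star (q ^ m) = q ^ (-m) := by
      intro m
      rw [Complex.star_def, map_zpow₀, ← Complex.inv_eq_conj habs1, _root_.inv_zpow,
        ← _root_.zpow_neg]
    have hVV : V * Vᴴ = (n:ℂ) • (1 : Matrix (Fin n) (Fin n) ℂ) := by
      ext i j
      rw [mul_apply]
      have hterm : ∀ k : Fin n, V i k * Vᴴ k j = q ^ ((4*(i:ℤ) - 4*(j:ℤ)) * (k:ℤ)) := by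
        intro k
        rw [conjTranspose_apply, hV]
        simp only [Matrix.of_apply]
        rw [hconj, ← zpow_add₀ hq0]
        ring_nf
      rw [Finset.sum_congr rfl (fun k _ => hterm k), hsum]
      have hd : ((n:ℤ) ∣ 4*(i:ℤ) - 4*(j:ℤ)) ↔ i = j := by
        constructor
        · intro h
          have h4 : 4*(i:ℤ) - 4*(j:ℤ) = 4 * ((i:ℤ) - (j:ℤ)) := by ring
          rw [h4] at h
          have hcopn : Nat.Coprime n 4 := by
            have h2 : Nat.Coprime n 2 := Nat.coprime_two_right.mpr hn
            have h4' := h2.pow_right 2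
            norm_num at h4' ⊢
            exact h4'
          have hcop : IsCoprime (n:ℤ) (4:ℤ) := by
            have := Nat.isCoprime_iff_coprime.mpr hcopn
            exact_mod_cast this
          have hdvd := IsCoprime.dvd_of_dvd_mul_left hcop h
          have hi := i.isLt; have hj := j.isLt
          have habslt : |(i:ℤ) - (j:ℤ)| < n := by
            rw [abs_lt]
            constructor <;> [skip; skip] <;>
              · have hi' : ((i:ℕ):ℤ) < n := by exact_mod_cast hi
                have hj' : ((j:ℕ):ℤ) < n := by exact_mod_cast hj
                have hi0 : (0:ℤ) ≤ ((i:ℕ):ℤ) := Int.ofNat_nonneg _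
                have hj0 : (0:ℤ) ≤ ((j:ℕ):ℤ) := Int.ofNat_nonneg _
                linarith
          have := Int.eq_zero_of_abs_lt_dvd hdvd habslt
          exact Fin.ext (by omega)
        · rintro rfl; simp
      by_cases hij : i = j
      · simp [hij, hd, Matrix.one_apply]
      · rw [if_neg (fun h => hij (hd.mp h))]
        simp [Matrix.one_apply, hij]
    have hdetV2 : Complex.normSq V.det = (n:ℝ)^n := by
      have h1 : V.det * (starRingEnd ℂ) V.det = ((n:ℂ)^n) := by
        rw [← Complex.star_def, ← Matrix.det_conjTranspose, ← Matrix.det_mul, hVV]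
        simp [Matrix.det_smul, Fintype.card_fin]
      have h2 := Complex.mul_conj V.det
      rw [h1] at h2
      symm
      exact_mod_cast h2
    have habsV : ‖V.det‖ = Real.sqrt ((n:ℝ)^n) := by
      rw [Complex.norm_def, hdetV2]
    have hfac : Λ.det = (∏ i : Fin n, q ^ ((i:ℤ)^2 + (i:ℤ))) *
        ((∏ k : Fin n, q ^ ((k:ℤ)^2 - (k:ℤ))) * V.det) := by
      have hΛ' : Λ = Matrix.of fun (i k : Fin n) => q ^ ((i:ℤ)^2 + (i:ℤ)) *
          (Matrix.of (fun (a b : Fin n) => q ^ ((b:ℤ)^2 - (b:ℤ)) * V a b) i k) := by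
        ext i k
        rw [hΛ]
        simp only [Matrix.of_apply, hV]
        rw [← zpow_add₀ hq0, ← zpow_add₀ hq0]
        congr 1
        ring
      rw [hΛ', Matrix.det_mul_column, Matrix.det_mul_row]
    rw [hfac, norm_mul, norm_mul]
    have habsz : ∀ m : ℤ, ‖q ^ m‖ = 1 := by
      intro m; rw [norm_zpow, habs1, _root_.one_zpow]
    rw [show ‖∏ i : Fin n, q ^ ((i:ℤ)^2 + (i:ℤ))‖ = 1 by
          rw [norm_prod]; simp [habsz],
        show ‖∏ k : Fin n, q ^ ((k:ℤ)^2 - (k:ℤ))‖ = 1 by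
          rw [norm_prod]; simp [habsz],
        one_mul, one_mul, habsV]
    rw [Real.sqrt_eq_rpow, ← Real.rpow_natCast (n:ℝ) n, ← Real.rpow_mul (Nat.cast_nonneg n)]
    ring_nf
  · haveI : NeZero n := ⟨hpos.ne'⟩
    have hq0 : q ≠ 0 := hprim.ne_zero hpos.ne'
    set S : ℂ := ∑ i : Fin n, q ^ (6*(i:ℤ)^2) with hS
    have htr : Λ.trace = S := by
      rw [Matrix.trace, hS]
      apply Finset.sum_congr rfl
      intro i _
      rw [Matrix.diag_apply, hΛ]
      congr 1
      ring
    -- coprimality facts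
    have hcop4 : Nat.Coprime n 4 := by
      have h2 : Nat.Coprime n 2 := Nat.coprime_two_right.mpr hn
      have h4' := h2.pow_right 2
      norm_num at h4' ⊢
      exact h4'
    -- main computation
    have key : S * (starRingEnd ℂ) S =
        (((Finset.univ.filter (fun d : Fin n => (n:ℤ) ∣ 12 * (d:ℤ))).card : ℂ)) * n := by
      have hconjS : (starRingEnd ℂ) S = ∑ j : Fin n, q ^ (-(6*(j:ℤ)^2)) := by
        rw [hS, map_sum]
        exact Finset.sum_congr rfl fun j _ => hconj _
      rw [hconjS, hS, Finset.sum_mul_sum, Finset.sum_comm]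
      have step1 : ∀ j : Fin n, ∑ i : Fin n, q ^ (6*(i:ℤ)^2) * q ^ (-(6*(j:ℤ)^2))
          = ∑ d : Fin n, q ^ (6*(d:ℤ)^2) * q ^ ((12*(d:ℤ)) * (j:ℤ)) := by
        intro j
        have e := Equiv.sum_comp (Equiv.addRight j)
          (fun i : Fin n => q ^ (6*(i:ℤ)^2) * q ^ (-(6*(j:ℤ)^2)))
        rw [← e]
        apply Finset.sum_congr rfl
        intro d _
        simp only [Equiv.coe_addRight]
        rw [← zpow_add₀ hq0, ← zpow_add₀ hq0]
        apply zper
        -- n ∣ (6*((d+j).val)^2 + -(6 j²)) - (6 d² + 12 d j)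
        have hval : ((d + j : Fin n) : ℤ) = (((d:ℕ) + (j:ℕ)) % n : ℕ) := by
          rw [Fin.val_add]
        have hmod : ((((d:ℕ) + (j:ℕ)) % n : ℕ) : ℤ) = ((d:ℤ) + (j:ℤ)) % (n:ℤ) := by
          push_cast
          rfl
        have hdiff : (n:ℤ) ∣ ((d + j : Fin n) : ℤ) - ((d:ℤ) + (j:ℤ)) := by
          rw [hval, hmod, Int.emod_def]
          exact ⟨-(((d:ℤ) + (j:ℤ)) / n), by ring⟩
        obtain ⟨t, ht⟩ := hdiff
        refine ⟨6 * t * (((d + j : Fin n) : ℤ) + ((d:ℤ) + (j:ℤ))), ?_⟩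
        have : ((d + j : Fin n) : ℤ) = ((d:ℤ) + (j:ℤ)) + n * t := by linarith
        rw [this]
        ring
      rw [Finset.sum_congr rfl (fun j _ => step1 j), Finset.sum_comm]
      have step2 : ∀ d : Fin n, ∑ j : Fin n, q ^ (6*(d:ℤ)^2) * q ^ ((12*(d:ℤ)) * (j:ℤ))
          = q ^ (6*(d:ℤ)^2) * (if (n:ℤ) ∣ 12*(d:ℤ) then (n:ℂ) else 0) := by
        intro d
        rw [← Finset.mul_sum, hsum]
      rw [Finset.sum_congr rfl (fun d _ => step2 d)]
      have step3 : ∀ d : Fin n,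
          q ^ (6*(d:ℤ)^2) * (if (n:ℤ) ∣ 12*(d:ℤ) then (n:ℂ) else 0)
          = if (n:ℤ) ∣ 12*(d:ℤ) then (n:ℂ) else 0 := by
        intro d
        by_cases h : (n:ℤ) ∣ 12*(d:ℤ)
        · rw [if_pos h]
          have h3d : (n:ℤ) ∣ 3*(d:ℤ) := by
            have hcop : IsCoprime (n:ℤ) (4:ℤ) := by
              have := Nat.isCoprime_iff_coprime.mpr hcop4
              exact_mod_cast this
            have h' : (n:ℤ) ∣ 4 * (3*(d:ℤ)) := by
              convert h using 1; ring
            exact IsCoprime.dvd_of_dvd_mul_left hcop h'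
          have h6 : (n:ℤ) ∣ 6*(d:ℤ)^2 - 0 := by
            obtain ⟨t, ht⟩ := h3d
            exact ⟨2*(d:ℤ)*t, by rw [sub_zero]; nlinarith [ht]⟩
          rw [zper h6, zpow_zero, one_mul]
        · rw [if_neg h, mul_zero]
      rw [Finset.sum_congr rfl (fun d _ => step3 d), Finset.sum_ite, Finset.sum_const,
        Finset.sum_const_zero, add_zero, nsmul_eq_mul]
    -- the cardinality
    have hcard : (Finset.univ.filter (fun d : Fin n => (n:ℤ) ∣ 12 * (d:ℤ))).card = Nat.gcd 6 n := by
      have hodd2 : ¬ 2 ∣ n := by rw [Nat.odd_iff] at hn; omega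
      have hnat : ∀ d : Fin n, ((n:ℤ) ∣ 12 * (d:ℤ)) ↔ n ∣ 12 * (d:ℕ) := by
        intro d
        rw [← Int.natCast_dvd_natCast]
        push_cast
        rfl
      by_cases h3 : 3 ∣ n
      · have hg : Nat.gcd 6 n = 3 := by
          have h1 : 3 ∣ Nat.gcd 6 n := Nat.dvd_gcd (by norm_num) h3
          have h2 : Nat.gcd 6 n ∣ 6 := Nat.gcd_dvd_left 6 n
          have h2d : ¬ 2 ∣ Nat.gcd 6 n := fun h => hodd2 (h.trans (Nat.gcd_dvd_right 6 n))
          have hgpos : 0 < Nat.gcd 6 n := Nat.gcd_pos_of_pos_right 6 hpos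
          have hle : Nat.gcd 6 n ≤ 6 := Nat.le_of_dvd (by norm_num) h2
          set g := Nat.gcd 6 n
          interval_cases g <;> omega
        rw [hg]
        obtain ⟨m, hm⟩ := h3
        have hm0 : 0 < m := by omega
        have hfe : (Finset.univ.filter (fun d : Fin n => (n:ℤ) ∣ 12 * (d:ℤ)))
            = {(⟨0, hpos⟩ : Fin n), ⟨m, by omega⟩, ⟨2*m, by omega⟩} := by
          ext d
          simp only [Finset.mem_filter, Finset.mem_univ, true_and, Finset.mem_insert,
            Finset.mem_singleton, hnat d]
          constructor
          · intro hdvd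
            have h3d : n ∣ 3 * (d:ℕ) := by
              refine hcop4.dvd_of_dvd_mul_right ?_
              convert hdvd using 1
              ring
            obtain ⟨t, ht⟩ := h3d
            have hmd : (d:ℕ) = m * t := by
              have h33 : 3 * (d:ℕ) = 3 * (m * t) := by rw [ht, hm]; ring
              omega
            obtain ⟨s, hs⟩ : m ∣ (d:ℕ) := ⟨t, hmd⟩
            have hdlt := d.isLt
            have hs3 : s < 3 := by
              by_contra hs3
              push_neg at hs3
              have : m * 3 ≤ m * s := Nat.mul_le_mul_left m hs3
              omega
            interval_cases s
            · left; exact Fin.ext (show (d:ℕ) = 0 by omega)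
            · right; left; exact Fin.ext (show (d:ℕ) = m by omega)
            · right; right; exact Fin.ext (show (d:ℕ) = 2 * m by omega)
          · rintro (rfl | rfl | rfl)
            · show n ∣ 12 * 0; simp
            · show n ∣ 12 * m; exact ⟨4, by omega⟩
            · show n ∣ 12 * (2 * m); exact ⟨8, by omega⟩
        rw [hfe]
        rw [Finset.card_insert_of_notMem (by simp [Fin.ext_iff]; omega),
          Finset.card_insert_of_notMem (by simp [Fin.ext_iff]; omega),
          Finset.card_singleton]
      · have hg : Nat.gcd 6 n = 1 := by
          have h2 : Nat.gcd 6 n ∣ 6 := Nat.gcd_dvd_left 6 n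
          have h2d : ¬ 2 ∣ Nat.gcd 6 n := fun h => hodd2 (h.trans (Nat.gcd_dvd_right 6 n))
          have h3d : ¬ 3 ∣ Nat.gcd 6 n := fun h => h3 (h.trans (Nat.gcd_dvd_right 6 n))
          have hgpos : 0 < Nat.gcd 6 n := Nat.gcd_pos_of_pos_right 6 hpos
          have hle : Nat.gcd 6 n ≤ 6 := Nat.le_of_dvd (by norm_num) h2
          set g := Nat.gcd 6 n
          interval_cases g <;> omega
        rw [hg]
        have hcop3 : Nat.Coprime n 3 :=
          ((Nat.Prime.coprime_iff_not_dvd Nat.prime_three).mpr h3).symm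
        have hcop12 : Nat.Coprime n 12 := by
          have := Nat.Coprime.mul_right hcop4 hcop3
          norm_num at this ⊢
          exact this
        have hfe : (Finset.univ.filter (fun d : Fin n => (n:ℤ) ∣ 12 * (d:ℤ)))
            = {(⟨0, hpos⟩ : Fin n)} := by
          ext d
          simp only [Finset.mem_filter, Finset.mem_univ, true_and, Finset.mem_singleton, hnat d]
          constructor
          · intro hdvd
            have hd : n ∣ (d:ℕ) := hcop12.dvd_of_dvd_mul_left hdvd
            exact Fin.ext (Nat.eq_zero_of_dvd_of_lt hd d.isLt)
          · rintro rfl; show n ∣ 12 * 0; simp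
        rw [hfe, Finset.card_singleton]
    rw [htr, Complex.norm_def]
    have hnorm : Complex.normSq S = (Nat.gcd 6 n : ℝ) * n := by
      have := Complex.mul_conj S
      rw [key, hcard] at this
      exact_mod_cast this.symm
    rw [hnorm]
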